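/- arXiv:1308.0379 — 2 statements merged into one kernel-verified Lean document; each statement's English description precedes it below -/
import Mathlib

section
/- For the rotation T by irrational α and the interval B_k around 0 of total length η_k + η_{k+1} (as defined from the convergents), the Lebesgue measure of the set {x : τ_{B_k}(x) ≤ s} equals 1 if s ≥ q_{k+1}, equals q_k η_{k+1} + η_k ⌊s⌋ if q_k ≤ s < q_{k+1}, and equals (η_k + η_{k+1}) ⌊s⌋ if 0 ≤ s < q_k. -/
open MeasureTheory Filter Set Topology

/-- Iterates of the Gauss map starting at `α`; `cfTail α k` has continued
fraction expansion `[c_{k+1}, c_{k+2}, ...]` when `α = [c_1, c_2, ...]`. -/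
noncomputable def cfTail (α : ℝ) : ℕ → ℝ
  | 0 => α
  | n + 1 => Int.fract (1 / cfTail α n)

/-- `cfC α k` is the partial quotient `c_{k+1}` of the continued fraction of `α`. -/
noncomputable def cfC (α : ℝ) (k : ℕ) : ℤ := ⌊1 / cfTail α k⌋

/-- Numerators of the convergents: `p 0 = 0`, `p 1 = 1`, `p k = c_k p_{k-1} + p_{k-2}`. -/
noncomputable def cfP (α : ℝ) : ℕ → ℤ
  | 0 => 0
  | 1 => 1
  | k + 2 => cfC α (k + 1) * cfP α (k + 1) + cfP α k

/-- Denominators of the convergents: `q 0 = 1`, `q 1 = c_1`, `q k = c_k q_{k-1} + q_{k-2}`. -/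
noncomputable def cfQ (α : ℝ) : ℕ → ℤ
  | 0 => 1
  | 1 => cfC α 0
  | k + 2 => cfC α (k + 1) * cfQ α (k + 1) + cfQ α k

/-- `η_k = |q_k α - p_k|`. -/
noncomputable def cfEta (α : ℝ) (k : ℕ) : ℝ := |(cfQ α k : ℝ) * α - (cfP α k : ℝ)|

/-- Rotation by `α` on `[0,1)`. -/
noncomputable def rot (α : ℝ) (x : ℝ) : ℝ := Int.fract (x + α)

/-- The interval `(-η_{k+1}, η_k)` mod 1 for `k` even, `(-η_k, η_{k+1})` mod 1 for `k` odd,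
viewed as a subset of `[0,1)`. -/
noncomputable def Bset (α : ℝ) (k : ℕ) : Set ℝ :=
  if Even k then Set.Ioo 0 (cfEta α k) ∪ Set.Ioo (1 - cfEta α (k + 1)) 1
  else Set.Ioo 0 (cfEta α (k + 1)) ∪ Set.Ioo (1 - cfEta α k) 1

/-- First entry time `τ_B(x) = min {j ≥ 1 : T^j x ∈ B}`, with value `∞` if `x` never enters. -/
noncomputable def entryTime (T : ℝ → ℝ) (B : Set ℝ) (x : ℝ) : ℕ∞ :=
  sInf ((fun n : ℕ => (n : ℕ∞)) '' {n : ℕ | 1 ≤ n ∧ T^[n] x ∈ B})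

/-- The observable `X(x) = q_{m+1}` where `m = min {ℓ : x ∉ B_ℓ}`. -/
noncomputable def Xobs (α : ℝ) (x : ℝ) : ℝ :=
  ((cfQ α (sInf {ℓ : ℕ | x ∉ Bset α ℓ} + 1) : ℤ) : ℝ)

/-- `M_n = max_{1 ≤ j ≤ n} X ∘ T^j`. -/
noncomputable def Mmax (α : ℝ) (n : ℕ) (x : ℝ) : ℝ :=
  ⨆ j : Finset.Icc 1 n, Xobs α ((rot α)^[(j : ℕ)] x)

/-- Level set `L(y) = {x : X(x) > y}`. -/
noncomputable def Lset (α : ℝ) (y : ℝ) : Set ℝ := {x | Xobs α x > y}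

/-- Lebesgue measure on `[0,1)`. -/
noncomputable def μrot : Measure ℝ := volume.restrict (Set.Ico (0 : ℝ) 1)

section CF
variable {α : ℝ} (hirr : Irrational α) (hα : α ∈ Set.Ioo (0 : ℝ) 1)

lemma tail_prop (hirr : Irrational α) (hα : α ∈ Set.Ioo (0 : ℝ) 1) :
    ∀ k, cfTail α k ∈ Set.Ioo (0:ℝ) 1 ∧ Irrational (cfTail α k) := by
  intro k
  induction k with
  | zero => exact ⟨hα, hirr⟩
  | succ n ih =>
    obtain ⟨⟨h0, h1⟩, hi⟩ := ih
    have hinv : Irrational (1 / cfTail α n) := by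
      simpa [one_div] using hi.inv
    have hfr : Irrational (Int.fract (1 / cfTail α n)) := by
      simpa [Int.fract, sub_eq_add_neg] using hinv.add_intCast (-⌊1 / cfTail α n⌋)
    have hne0 : Int.fract (1 / cfTail α n) ≠ 0 := by
      simpa using hfr.ne_int 0
    refine ⟨⟨lt_of_le_of_ne (Int.fract_nonneg _) (Ne.symm hne0), Int.fract_lt_one _⟩, hfr⟩

lemma tail_mul (hirr : Irrational α) (hα : α ∈ Set.Ioo (0 : ℝ) 1) (k : ℕ) :
    cfTail α k * ((cfC α k : ℝ) + cfTail α (k+1)) = 1 := by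
  have h0 := (tail_prop hirr hα k).1.1
  have : cfTail α (k+1) = 1 / cfTail α k - (cfC α k : ℝ) := rfl
  rw [this]
  field_simp
  ring

lemma cfC_one_le (hirr : Irrational α) (hα : α ∈ Set.Ioo (0 : ℝ) 1) (k : ℕ) :
    1 ≤ cfC α k := by
  obtain ⟨⟨h0, h1⟩, _⟩ := tail_prop hirr hα k
  have : (1:ℝ) ≤ 1 / cfTail α k := by
    rw [le_div_iff₀ h0]; linarith
  exact Int.le_floor.2 (by exact_mod_cast this)

noncomputable def etaProd (α : ℝ) (k : ℕ) : ℝ := ∏ j ∈ Finset.range (k+1), cfTail α j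

lemma etaProd_succ (α : ℝ) (k : ℕ) : etaProd α (k+1) = etaProd α k * cfTail α (k+1) := by
  simp [etaProd, Finset.prod_range_succ]

lemma etaProd_mem (hirr : Irrational α) (hα : α ∈ Set.Ioo (0 : ℝ) 1) (k : ℕ) :
    etaProd α k ∈ Set.Ioo (0:ℝ) 1 := by
  induction k with
  | zero => simpa [etaProd, Finset.prod_range_one, cfTail] using hα
  | succ n ih =>
    obtain ⟨h0, h1⟩ := (tail_prop hirr hα (n+1)).1
    rw [etaProd_succ]
    constructor
    · exact mul_pos ih.1 h0
    · nlinarith [ih.1, ih.2]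

lemma D_eq (hirr : Irrational α) (hα : α ∈ Set.Ioo (0 : ℝ) 1) :
    ∀ k, (cfQ α k : ℝ) * α - (cfP α k : ℝ) = (-1)^k * etaProd α k
  | 0 => by
      show ((1:ℤ):ℝ) * α - ((0:ℤ):ℝ) = (-1)^0 * etaProd α 0
      simp [etaProd, Finset.prod_range_one]
      rfl
  | 1 => by
      have h := tail_mul hirr hα 0
      have : etaProd α 1 = cfTail α 0 * cfTail α 1 := by
        simp [etaProd, Finset.prod_range_succ]
      rw [show cfTail α 0 = α from rfl] at h
      show ((cfC α 0 : ℤ):ℝ) * α - ((1:ℤ):ℝ) = (-1)^1 * etaProd α 1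
      rw [this, show cfTail α 0 = α from rfl]
      push_cast
      linear_combination h
  | (k+2) => by
      have h1 := D_eq hirr hα k
      have h2 := D_eq hirr hα (k+1)
      have hm := tail_mul hirr hα (k+1)
      have hps : etaProd α (k+2) = etaProd α (k+1) * cfTail α (k+2) := etaProd_succ α (k+1)
      have hps1 : etaProd α (k+1) = etaProd α k * cfTail α (k+1) := etaProd_succ α k
      show ((cfC α (k+1) * cfQ α (k+1) + cfQ α k : ℤ) : ℝ) * α - ((cfC α (k+1) * cfP α (k+1) + cfP α k : ℤ) : ℝ) = _
      push_cast
      have hpow : (-1:ℝ)^(k+2) = (-1)^k := by ring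
      have hpow1 : (-1:ℝ)^(k+1) = -(-1)^k := by ring
      rw [hpow, hps, hps1]
      rw [hpow1, hps1] at h2
      linear_combination (cfC α (k+1) : ℝ) * h2 + h1 - ((-1:ℝ)^k * etaProd α k) * hm

lemma cfEta_eq (hirr : Irrational α) (hα : α ∈ Set.Ioo (0 : ℝ) 1) (k : ℕ) :
    cfEta α k = etaProd α k := by
  rw [cfEta, D_eq hirr hα k, abs_mul, abs_pow, abs_neg, abs_one, one_pow, one_mul,
    abs_of_pos (etaProd_mem hirr hα k).1]

lemma D_eq' (hirr : Irrational α) (hα : α ∈ Set.Ioo (0 : ℝ) 1) (k : ℕ) :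
    (cfQ α k : ℝ) * α - (cfP α k : ℝ) = (-1)^k * cfEta α k := by
  rw [cfEta_eq hirr hα, D_eq hirr hα]

lemma cfEta_pos (hirr : Irrational α) (hα : α ∈ Set.Ioo (0 : ℝ) 1) (k : ℕ) :
    0 < cfEta α k := by rw [cfEta_eq hirr hα]; exact (etaProd_mem hirr hα k).1

lemma cfEta_lt_one (hirr : Irrational α) (hα : α ∈ Set.Ioo (0 : ℝ) 1) (k : ℕ) :
    cfEta α k < 1 := by rw [cfEta_eq hirr hα]; exact (etaProd_mem hirr hα k).2

lemma cfEta_succ_lt (hirr : Irrational α) (hα : α ∈ Set.Ioo (0 : ℝ) 1) (k : ℕ) :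
    cfEta α (k+1) < cfEta α k := by
  rw [cfEta_eq hirr hα, cfEta_eq hirr hα, etaProd_succ]
  obtain ⟨h0, h1⟩ := (tail_prop hirr hα (k+1)).1
  nlinarith [(etaProd_mem hirr hα k).1]

lemma cfQ_one_le (hirr : Irrational α) (hα : α ∈ Set.Ioo (0 : ℝ) 1) :
    ∀ k, 1 ≤ cfQ α k
  | 0 => le_refl 1
  | 1 => cfC_one_le hirr hα 0
  | (k+2) => by
      have h1 := cfQ_one_le hirr hα k
      have h2 := cfQ_one_le hirr hα (k+1)
      have hc := cfC_one_le hirr hα (k+1)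
      show 1 ≤ cfC α (k+1) * cfQ α (k+1) + cfQ α k
      nlinarith

lemma cfQ_mono (hirr : Irrational α) (hα : α ∈ Set.Ioo (0 : ℝ) 1) :
    ∀ k, cfQ α k ≤ cfQ α (k+1)
  | 0 => cfC_one_le hirr hα 0
  | (k+1) => by
      have h1 := cfQ_one_le hirr hα k
      have h2 := cfQ_one_le hirr hα (k+1)
      have hc := cfC_one_le hirr hα (k+1)
      show cfQ α (k+1) ≤ cfC α (k+1) * cfQ α (k+1) + cfQ α k
      nlinarith

lemma cfDet (hirr : Irrational α) (hα : α ∈ Set.Ioo (0 : ℝ) 1) :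
    ∀ k, cfQ α k * cfP α (k+1) - cfQ α (k+1) * cfP α k = (-1)^k := by
  intro k
  induction k with
  | zero => simp [cfQ, cfP]
  | succ n ih =>
    show cfQ α (n+1) * (cfC α (n+1) * cfP α (n+1) + cfP α n)
        - (cfC α (n+1) * cfQ α (n+1) + cfQ α n) * cfP α (n+1) = (-1)^(n+1)
    have : (-1:ℤ)^(n+1) = -(-1)^n := by ring
    rw [this, ← ih]
    ring

lemma one_eq (hirr : Irrational α) (hα : α ∈ Set.Ioo (0 : ℝ) 1) (k : ℕ) :
    (cfQ α (k+1) : ℝ) * cfEta α k + (cfQ α k : ℝ) * cfEta α (k+1) = 1 := by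
  have h1 := D_eq' hirr hα k
  have h2 := D_eq' hirr hα (k+1)
  have hd := cfDet hirr hα k
  have hd' : ((cfQ α k : ℝ) * cfP α (k+1) - cfQ α (k+1) * cfP α k) = (-1:ℝ)^k := by
    exact_mod_cast congrArg (fun z : ℤ => (z:ℝ)) hd
  have hpow1 : (-1:ℝ)^(k+1) = -(-1)^k := by ring
  rw [hpow1] at h2
  rcases Nat.even_or_odd k with h | h
  · rw [h.neg_one_pow] at h1 h2 hd'
    linear_combination (-(cfQ α (k+1):ℝ))*h1 + (cfQ α k:ℝ)*h2 + hd'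
  · rw [h.neg_one_pow] at h1 h2 hd'
    linear_combination ((cfQ α (k+1):ℝ))*h1 - (cfQ α k:ℝ)*h2 - hd'

lemma eta_rec (hirr : Irrational α) (hα : α ∈ Set.Ioo (0 : ℝ) 1) (k : ℕ) :
    cfEta α k = (cfC α (k+1) : ℝ) * cfEta α (k+1) + cfEta α (k+2) := by
  have h0 := D_eq' hirr hα k
  have h1 := D_eq' hirr hα (k+1)
  have h2 := D_eq' hirr hα (k+2)
  have hrec : ((cfQ α (k+2) : ℤ):ℝ) * α - ((cfP α (k+2) : ℤ):ℝ)
      = (cfC α (k+1):ℝ) * ((cfQ α (k+1):ℝ) * α - (cfP α (k+1):ℝ))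
        + ((cfQ α k:ℝ) * α - (cfP α k:ℝ)) := by
    show ((cfC α (k+1) * cfQ α (k+1) + cfQ α k : ℤ):ℝ) * α
        - ((cfC α (k+1) * cfP α (k+1) + cfP α k : ℤ):ℝ) = _
    push_cast; ring
  rw [h0, h1, h2] at hrec
  rcases Nat.even_or_odd k with h | h
  · obtain ⟨m, hm⟩ := h
    have e2 : Even (k+2) := ⟨m+1, by omega⟩
    have o1 : Odd (k+1) := ⟨m, by omega⟩
    have r0 : (-1:ℝ)^k = 1 := Even.neg_one_pow ⟨m, hm⟩
    have r2 : (-1:ℝ)^(k+2) = 1 := Even.neg_one_pow e2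
    have r1 : (-1:ℝ)^(k+1) = -1 := Odd.neg_one_pow o1
    rw [r0, r2, r1] at hrec
    linarith [hrec]
  · obtain ⟨m, hm⟩ := h
    have o2 : Odd (k+2) := ⟨m+1, by omega⟩
    have e1 : Even (k+1) := ⟨m+1, by omega⟩
    have r0 : (-1:ℝ)^k = -1 := Odd.neg_one_pow ⟨m, hm⟩
    have r2 : (-1:ℝ)^(k+2) = -1 := Odd.neg_one_pow o2
    have r1 : (-1:ℝ)^(k+1) = 1 := Even.neg_one_pow e1
    rw [r0, r2, r1] at hrec
    linarith [hrec]

lemma eta_sum_le (hirr : Irrational α) (hα : α ∈ Set.Ioo (0 : ℝ) 1) (k : ℕ) :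
    cfEta α (k+1) + cfEta α (k+2) ≤ cfEta α k := by
  have := eta_rec hirr hα k
  have hc := cfC_one_le hirr hα (k+1)
  have hc' : (1:ℝ) ≤ (cfC α (k+1) : ℝ) := by exact_mod_cast hc
  nlinarith [cfEta_pos hirr hα (k+1), cfEta_pos hirr hα (k+2)]

lemma dio1_core (β : ℝ) (q0 q1 p0 p1 d r : ℤ) (e0 e1 : ℝ)
    (h0 : (q0:ℝ) * β - p0 = e0) (h1 : (q1:ℝ) * β - p1 = -e1)
    (hdet : q0 * p1 - q1 * p0 = 1)
    (hq0 : 1 ≤ q0) (hq1 : 1 ≤ q1) (he1 : 0 < e1) (he01 : e1 ≤ e0)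
    (hd0 : d ≠ 0) (hdq : |d| < q1) (hdk : |d| ≠ q0) :
    e0 + e1 ≤ |(d:ℝ) * β - (r:ℝ)| := by
  obtain ⟨a, b, ha, hb⟩ : ∃ a b : ℤ, a = d * p1 - r * q1 ∧ b = r * q0 - d * p0 :=
    ⟨_, _, rfl, rfl⟩
  have hd : d = a * q0 + b * q1 := by rw [ha, hb]; linear_combination (-d) * hdet
  have hr : r = a * p0 + b * p1 := by rw [ha, hb]; linear_combination (-r) * hdet
  have hval : (d:ℝ) * β - (r:ℝ) = (a:ℝ) * e0 - (b:ℝ) * e1 := by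
    have hdR : (d:ℝ) = (a:ℝ) * q0 + (b:ℝ) * q1 := by exact_mod_cast congrArg (fun z : ℤ => (z:ℝ)) hd
    have hrR : (r:ℝ) = (a:ℝ) * p0 + (b:ℝ) * p1 := by exact_mod_cast congrArg (fun z : ℤ => (z:ℝ)) hr
    rw [hdR, hrR]
    linear_combination (a:ℝ) * h0 + (b:ℝ) * h1
  clear ha hb
  rw [hval]
  have habs := abs_lt.1 hdq
  have he0 : 0 < e0 := lt_of_lt_of_le he1 he01
  rcases lt_trichotomy a 0 with haneg | ha0 | hapos
  · rcases lt_trichotomy b 0 with hbneg | hb0 | hbpos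
    · exfalso; nlinarith [habs.1, habs.2]
    · subst hb0
      rw [zero_mul, add_zero] at hd
      have ha2 : a ≤ -2 := by
        rcases eq_or_lt_of_le (show a ≤ -1 by omega) with h | h
        · exfalso; apply hdk
          rw [hd, h, neg_one_mul, abs_neg]
          exact abs_of_pos (by omega)
        · omega
      have haR : (a:ℝ) ≤ -2 := by exact_mod_cast ha2
      push_cast
      rw [zero_mul, sub_zero, abs_of_nonpos (by nlinarith)]
      nlinarith
    · have haR : (a:ℝ) ≤ -1 := by exact_mod_cast (show a ≤ -1 by omega)
      have hbR : (1:ℝ) ≤ (b:ℝ) := by exact_mod_cast hbpos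
      rw [abs_sub_comm, abs_of_nonneg (by nlinarith)]
      nlinarith
  · exfalso
    subst ha0
    rw [zero_mul, zero_add] at hd
    rcases lt_trichotomy b 0 with h | h | h
    · nlinarith [habs.1]
    · apply hd0; rw [hd, h, zero_mul]
    · nlinarith [habs.2]
  · rcases lt_trichotomy b 0 with hbneg | hb0 | hbpos
    · have haR : (1:ℝ) ≤ (a:ℝ) := by exact_mod_cast hapos
      have hbR : (b:ℝ) ≤ -1 := by exact_mod_cast (show b ≤ -1 by omega)
      rw [abs_of_nonneg (by nlinarith)]
      nlinarith
    · subst hb0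
      rw [zero_mul, add_zero] at hd
      have ha2 : 2 ≤ a := by
        rcases eq_or_lt_of_le (show 1 ≤ a by omega) with h | h
        · exfalso; apply hdk
          rw [hd, ← h, one_mul]
          exact abs_of_pos (by omega)
        · omega
      have haR : (2:ℝ) ≤ (a:ℝ) := by exact_mod_cast ha2
      push_cast
      rw [zero_mul, sub_zero, abs_of_nonneg (by nlinarith)]
      nlinarith
    · exfalso; nlinarith [habs.2]

lemma dio1 (hirr : Irrational α) (hα : α ∈ Set.Ioo (0 : ℝ) 1) (k : ℕ) (d r : ℤ)
    (hd0 : d ≠ 0) (hdq : |d| < cfQ α (k+1)) (hdk : |d| ≠ cfQ α k) :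
    cfEta α k + cfEta α (k+1) ≤ |(d:ℝ) * α - (r:ℝ)| := by
  have h0 := D_eq' hirr hα k
  have h1 := D_eq' hirr hα (k+1)
  have hdet := cfDet hirr hα k
  have hq0 := cfQ_one_le hirr hα k
  have hq1 := cfQ_one_le hirr hα (k+1)
  have he1 := cfEta_pos hirr hα (k+1)
  have he01 : cfEta α (k+1) ≤ cfEta α k := le_of_lt (cfEta_succ_lt hirr hα k)
  rcases Nat.even_or_odd k with h | h
  · have o1 : Odd (k+1) := Even.add_one h
    rw [h.neg_one_pow, one_mul] at h0
    rw [o1.neg_one_pow] at h1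
    rw [h.neg_one_pow] at hdet
    exact dio1_core α (cfQ α k) (cfQ α (k+1)) (cfP α k) (cfP α (k+1)) d r _ _ h0
      (by linarith [h1]) hdet hq0 hq1 he1 he01 hd0 hdq hdk
  · have e1 : Even (k+1) := Odd.add_one h
    rw [h.neg_one_pow] at h0
    rw [e1.neg_one_pow, one_mul] at h1
    rw [h.neg_one_pow] at hdet
    have hval : |(d:ℝ) * α - (r:ℝ)| = |(d:ℝ) * (-α) - ((-r:ℤ):ℝ)| := by
      push_cast
      rw [← abs_neg]
      congr 1
      ring
    rw [hval]
    exact dio1_core (-α) (cfQ α k) (cfQ α (k+1)) (-cfP α k) (-cfP α (k+1)) d (-r) _ _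
      (by push_cast; linarith [h0]) (by push_cast; linarith [h1])
      (by linarith [hdet]) hq0 hq1 he1 he01 hd0 hdq hdk

lemma dio2 (hirr : Irrational α) (hα : α ∈ Set.Ioo (0 : ℝ) 1) (k : ℕ) (r : ℤ)
    (hr : r ≠ cfP α k) :
    1 - cfEta α k ≤ |(cfQ α k : ℝ) * α - (r:ℝ)| := by
  have h2 : 1 ≤ |cfP α k - r| := Int.one_le_abs (sub_ne_zero.2 (Ne.symm hr))
  have h1 : (1:ℝ) ≤ |((cfP α k - r : ℤ):ℝ)| := by exact_mod_cast h2
  push_cast at h1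
  have tri : |(cfP α k:ℝ) - (r:ℝ)|
      ≤ |(cfQ α k:ℝ) * α - (r:ℝ)| + |(cfQ α k:ℝ) * α - (cfP α k:ℝ)| := by
    calc |(cfP α k:ℝ) - (r:ℝ)|
        = |((cfQ α k:ℝ) * α - (r:ℝ)) - ((cfQ α k:ℝ) * α - (cfP α k:ℝ))| := by congr 1; ring
      _ ≤ _ := abs_sub _ _
  have : |(cfQ α k:ℝ) * α - (cfP α k:ℝ)| = cfEta α k := rfl
  rw [this] at tri
  linarith

lemma qk_sign (hirr : Irrational α) (hα : α ∈ Set.Ioo (0 : ℝ) 1) (k : ℕ) :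
    (cfQ α k : ℝ) * α - (cfP α k : ℝ) = (-1)^k * cfEta α k := D_eq' hirr hα k

end CF

lemma fract_mem_iff {a b y : ℝ} (h0 : 0 ≤ a) (h1 : b ≤ 1) :
    Int.fract y ∈ Set.Ioo a b ↔ ∃ r : ℤ, y - r ∈ Set.Ioo a b := by
  constructor
  · intro h
    exact ⟨⌊y⌋, by rwa [Int.self_sub_floor]⟩
  · rintro ⟨r, hr⟩
    have : Int.fract y = y - r := by
      rw [← Int.fract_sub_intCast y r]
      exact Int.fract_eq_self.2 ⟨le_trans h0 (le_of_lt hr.1), lt_of_lt_of_le hr.2 h1⟩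
    rw [this]; exact hr

lemma disj_pre {c1 c2 a1 b1 a2 b2 : ℝ} (ha1 : 0 ≤ a1) (hb1 : b1 ≤ 1) (ha2 : 0 ≤ a2)
    (hb2 : b2 ≤ 1)
    (h : ∀ r : ℤ, (c1 - c2 - r) ∉ Set.Ioo (a1 - b2) (b1 - a2)) :
    Disjoint ((fun x => Int.fract (x + c1)) ⁻¹' Set.Ioo a1 b1)
      ((fun x => Int.fract (x + c2)) ⁻¹' Set.Ioo a2 b2) := by
  rw [Set.disjoint_left]
  intro x h1 h2
  obtain ⟨r1, hr1⟩ := (fract_mem_iff ha1 hb1).1 h1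
  obtain ⟨r2, hr2⟩ := (fract_mem_iff ha2 hb2).1 h2
  refine h (r1 - r2) ⟨?_, ?_⟩ <;> push_cast <;>
    [linarith [hr1.1, hr2.2]; linarith [hr1.2, hr2.1]]

lemma vol_fract_preimage (c : ℝ) {S : Set ℝ} (hS : MeasurableSet S)
    (hS1 : S ⊆ Set.Ico 0 1) :
    volume (Set.Ico (0:ℝ) 1 ∩ (fun x => Int.fract (x + c)) ⁻¹' S) = volume S := by
  set c' := Int.fract c with hc'
  have hc0 : 0 ≤ c' := Int.fract_nonneg c
  have hc1 : c' < 1 := Int.fract_lt_one c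
  have hfr : ∀ x : ℝ, Int.fract (x + c) = Int.fract (x + c') := by
    intro x
    rw [← Int.fract_sub_intCast (x + c) ⌊c⌋]
    congr 1
    rw [hc', Int.fract]
    ring
  have hset : Set.Ico (0:ℝ) 1 ∩ (fun x => Int.fract (x + c)) ⁻¹' S
      = ((fun x => x + c') ⁻¹' (S ∩ Set.Ico c' 1))
        ∪ ((fun x => x + (c' - 1)) ⁻¹' (S ∩ Set.Ico 0 c')) := by
    ext x
    simp only [Set.mem_inter_iff, Set.mem_preimage, Set.mem_union, Set.mem_Ico]
    constructor
    · rintro ⟨⟨hx0, hx1⟩, hxS⟩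
      rw [hfr] at hxS
      rcases lt_or_ge (x + c') 1 with h | h
      · left
        have : Int.fract (x + c') = x + c' := Int.fract_eq_self.2 ⟨by linarith, h⟩
        rw [this] at hxS
        exact ⟨hxS, by linarith, h⟩
      · right
        have : Int.fract (x + c') = x + c' - 1 := by
          rw [← Int.fract_sub_intCast (x + c') 1, Int.cast_one]
          exact Int.fract_eq_self.2 ⟨by linarith, by linarith⟩
        rw [this] at hxS
        exact ⟨by rwa [show x + (c' - 1) = x + c' - 1 by ring], by linarith, by linarith⟩
    · rintro (⟨hxS, hy0, hy1⟩ | ⟨hxS, hy0, hy1⟩)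
      · have : Int.fract (x + c') = x + c' := Int.fract_eq_self.2 ⟨by linarith, hy1⟩
        rw [hfr, this]
        exact ⟨⟨by linarith, by linarith⟩, hxS⟩
      · have : Int.fract (x + c') = x + (c' - 1) := by
          rw [← Int.fract_sub_intCast (x + c') 1, Int.cast_one,
            show x + c' - 1 = x + (c' - 1) by ring]
          exact Int.fract_eq_self.2 ⟨hy0, by linarith⟩
        rw [hfr, this]
        exact ⟨⟨by linarith, by linarith⟩, hxS⟩
  rw [hset]
  have hdisj : Disjoint ((fun x : ℝ => x + c') ⁻¹' (S ∩ Set.Ico c' 1))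
      ((fun x : ℝ => x + (c' - 1)) ⁻¹' (S ∩ Set.Ico 0 c')) := by
    rw [Set.disjoint_left]
    rintro x ⟨_, _, h1⟩ ⟨_, h2, _⟩
    simp only at *
    linarith
  rw [measure_union hdisj (measurable_add_const _ ((hS.inter measurableSet_Ico))),
    measure_preimage_add_right volume _ _, measure_preimage_add_right volume _ _,
    ← measure_union (Set.disjoint_left.2 (by rintro x ⟨_, _, h1⟩ ⟨_, _, h2⟩; linarith))
      (hS.inter measurableSet_Ico)]
  congr 1
  rw [← Set.inter_union_distrib_left, Set.union_comm,
    Set.Ico_union_Ico_eq_Ico hc0 (le_of_lt hc1), Set.inter_eq_left.2 hS1]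

section Key
variable {α e f : ℝ} {q Q p : ℤ}

lemma keyII (hq : 1 ≤ q) (hf : 0 < f) (hef : f < e) (hefs : e + f ≤ 1)
    (h2 : q < Q → 2*e + f ≤ 1)
    (hqabs : |(q:ℝ)*α - p| = e)
    (hdio1 : ∀ d r : ℤ, d ≠ 0 → |d| < Q → |d| ≠ q → e + f ≤ |(d:ℝ)*α - r|)
    (hdio2 : ∀ r : ℤ, r ≠ p → 1 - e ≤ |(q:ℝ)*α - r|)
    (d : ℤ) (hd0 : d ≠ 0) (hdQ : |d| < Q) :
    ∀ r : ℤ, (d:ℝ)*α - r ∉ Set.Ioo (-e) e := by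
  intro r hmem
  have hlt : |(d:ℝ)*α - r| < e := abs_lt.2 ⟨hmem.1, hmem.2⟩
  by_cases hdq : |d| = q
  · have hqQ : q < Q := hdq ▸ hdQ
    have h2' := h2 hqQ
    have : ∃ r' : ℤ, |(d:ℝ)*α - r| = |(q:ℝ)*α - r'| := by
      rcases (abs_eq (by omega : (0:ℤ) ≤ q)).1 hdq with h | h
      · exact ⟨r, by rw [h]⟩
      · refine ⟨-r, ?_⟩
        rw [h]
        push_cast
        rw [← abs_neg]
        congr 1
        ring
    obtain ⟨r', hr'⟩ := this
    rw [hr'] at hlt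
    by_cases hrp : r' = p
    · rw [hrp, hqabs] at hlt; linarith
    · have := hdio2 r' hrp; linarith
  · have := hdio1 d r hd0 hdQ hdq; linarith

lemma keyJJ (hq : 1 ≤ q) (hqQ : q ≤ Q) (hf : 0 < f) (hef : f < e)
    (hdio1 : ∀ d r : ℤ, d ≠ 0 → |d| < Q → |d| ≠ q → e + f ≤ |(d:ℝ)*α - r|)
    (d : ℤ) (hd0 : d ≠ 0) (hdq : |d| < q) :
    ∀ r : ℤ, (d:ℝ)*α - r ∉ Set.Ioo (-f) f := by
  intro r hmem
  have hlt : |(d:ℝ)*α - r| < f := abs_lt.2 ⟨hmem.1, hmem.2⟩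
  have := hdio1 d r hd0 (by omega) (by omega)
  linarith

lemma keyIJ_even {N : ℤ} (hq : 1 ≤ q) (hqQ : q ≤ Q) (hNQ : N ≤ Q)
    (hf : 0 < f) (hef : f < e) (hefs : e + f ≤ 1)
    (h2 : q < Q → 2*e + f ≤ 1)
    (hqα : (q:ℝ)*α - p = e)
    (hdio1 : ∀ d r : ℤ, d ≠ 0 → |d| < Q → |d| ≠ q → e + f ≤ |(d:ℝ)*α - r|)
    (d : ℤ) (hd1 : -N < d) (hd2 : d < q) :
    ∀ r : ℤ, (d:ℝ)*α - r ∉ Set.Ioo (-1 : ℝ) (e + f - 1) := by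
  intro r hmem
  -- v + 1 ∈ (0, e+f) where v = dα - r
  have hv1 : (0:ℝ) < (d:ℝ)*α - (r-1) := by push_cast; linarith [hmem.1]
  have hv2 : (d:ℝ)*α - (r-1) < e + f := by push_cast; linarith [hmem.2]
  rcases eq_or_ne d 0 with h0 | h0
  · subst h0
    have h1 : (0:ℝ) < ((1 - r : ℤ):ℝ) := by push_cast; push_cast at hv1; linarith
    have h2' : ((1 - r : ℤ):ℝ) < 1 := by push_cast; push_cast at hv2; linarith
    have : (0:ℤ) < 1 - r := by exact_mod_cast h1
    have : (1 - r : ℤ) < 1 := by exact_mod_cast h2'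
    omega
  · by_cases hdq : |d| = q
    · have hd : d = -q := by
        rcases (abs_eq (by omega : (0:ℤ) ≤ q)).1 hdq with h | h
        · omega
        · exact h
      have hqN : q < N := by omega
      have h2' := h2 (by omega)
      -- v + 1 = (1 - p - r) - e
      have hval : (d:ℝ)*α - (r-1) = ((1 - p - r : ℤ):ℝ) - e := by
        rw [hd]; push_cast; linarith [hqα]
      rw [hval] at hv1 hv2
      have hgt : (0:ℝ) < ((1 - p - r : ℤ):ℝ) := by linarith [hef, hf]
      have hlt : ((1 - p - r : ℤ):ℝ) < 1 := by linarith
      have : (0:ℤ) < 1 - p - r := by exact_mod_cast hgt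
      have : (1 - p - r : ℤ) < 1 := by exact_mod_cast hlt
      omega
    · have hdQ : |d| < Q := by
        rcases lt_trichotomy d 0 with h | h | h
        · rw [abs_of_neg h]; omega
        · exact absurd h h0
        · rw [abs_of_pos h]; omega
      have := hdio1 d (r-1) h0 hdQ hdq
      have habs : |(d:ℝ)*α - ((r-1 : ℤ):ℝ)| < e + f := by
        rw [abs_lt]; push_cast; constructor
        · linarith
        · linarith
      linarith [this, habs]

lemma keyIJ_odd {N : ℤ} (hq : 1 ≤ q) (hqQ : q ≤ Q) (hNQ : N ≤ Q)
    (hf : 0 < f) (hef : f < e) (hefs : e + f ≤ 1)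
    (h2 : q < Q → 2*e + f ≤ 1)
    (hqα : (q:ℝ)*α - p = -e)
    (hdio1 : ∀ d r : ℤ, d ≠ 0 → |d| < Q → |d| ≠ q → e + f ≤ |(d:ℝ)*α - r|)
    (d : ℤ) (hd1 : -N < d) (hd2 : d < q) :
    ∀ r : ℤ, (d:ℝ)*α - r ∉ Set.Ioo (1 - e - f : ℝ) 1 := by
  intro r hmem
  simp only [Set.mem_Ioo] at hmem
  obtain ⟨hm1, hm2⟩ := hmem
  rcases eq_or_ne d 0 with h0 | h0
  · subst h0
    push_cast at hm1 hm2
    have hge : (0:ℝ) ≤ 1 - e - f := by linarith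
    have h1 : (0:ℝ) < ((-r:ℤ):ℝ) := by push_cast; linarith
    have h2' : ((-r:ℤ):ℝ) < 1 := by push_cast; linarith
    have i1 : (0:ℤ) < -r := by exact_mod_cast h1
    have i2 : (-r:ℤ) < 1 := by exact_mod_cast h2'
    omega
  · by_cases hdq : |d| = q
    · have hd : d = -q := by
        rcases (abs_eq (by omega : (0:ℤ) ≤ q)).1 hdq with h | h
        · omega
        · exact h
      have hqN : q < N := by omega
      have h2' := h2 (by omega)
      -- v = e + (-p - r)
      have hval : (d:ℝ)*α - r = e + ((-p - r : ℤ):ℝ) := by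
        rw [hd]; push_cast; linarith [hqα]
      rw [hval] at hm1 hm2
      have hlt : ((-p - r : ℤ):ℝ) < 1 := by linarith
      have hgt : (-1:ℝ) < ((-p - r : ℤ):ℝ) := by linarith
      have h1 : (-p - r : ℤ) < 1 := by exact_mod_cast hlt
      have h2'' : (-1 : ℤ) < -p - r := by exact_mod_cast hgt
      have hz : (-p - r : ℤ) = 0 := by omega
      rw [hz] at hm1
      simp at hm1
      linarith
    · have hdQ : |d| < Q := by
        rcases lt_trichotomy d 0 with h | h | h
        · rw [abs_of_neg h]; omega
        · exact absurd h h0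
        · rw [abs_of_pos h]; omega
      have := hdio1 d (r+1) h0 hdQ hdq
      have habs : |(d:ℝ)*α - ((r+1 : ℤ):ℝ)| < e + f := by
        rw [abs_lt]; push_cast; constructor
        · linarith
        · linarith
      linarith [this, habs]

end Key


lemma fract_fract_add (y c : ℝ) : Int.fract (Int.fract y + c) = Int.fract (y + c) := by
  have h : Int.fract y + c = y + c - (⌊y⌋ : ℝ) := by rw [Int.fract]; ring
  rw [h, Int.fract_sub_intCast]

section MainEven
variable {α e f : ℝ} {q Q p : ℤ}

lemma vol_main_even
    (hf : 0 < f) (hef : f < e) (hefs : e + f ≤ 1)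
    (hq : 1 ≤ q) (hqQ : q ≤ Q)
    (h2 : q < Q → 2*e + f ≤ 1)
    (hqα : (q:ℝ)*α - p = e)
    (hdio1 : ∀ d r : ℤ, d ≠ 0 → |d| < Q → |d| ≠ q → e + f ≤ |(d:ℝ)*α - r|)
    (hdio2 : ∀ r : ℤ, r ≠ p → 1 - e ≤ |(q:ℝ)*α - r|)
    (N : ℕ) (hNQ : (N:ℤ) ≤ Q) :
    volume (⋃ j ∈ Finset.range N, (Set.Ico (0:ℝ) 1 ∩
        (fun x => Int.fract (x + (-(j:ℝ) * α)))⁻¹' (Set.Ioo 0 e ∪ Set.Ioo (1-f) 1)))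
      = ENNReal.ofReal ((N:ℝ) * e + ((min (N:ℤ) q : ℤ):ℝ) * f) := by
  have he : 0 < e := lt_trans hf hef
  have he1 : e ≤ 1 := by linarith
  have hf1 : f ≤ 1 := by linarith
  have hqabs : |(q:ℝ)*α - p| = e := by rw [hqα]; exact abs_of_pos he
  set M : ℕ := min N q.toNat with hM
  have hqtn : ((q.toNat : ℤ)) = q := Int.toNat_of_nonneg (by omega)
  have hMZ : (M:ℤ) = min (N:ℤ) q := by
    rw [hM]; push_cast [Nat.cast_min]; omega
  have hMN : M ≤ N := min_le_left _ _
  have hMq : (M:ℤ) ≤ q := by omega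
  set IoP : ℕ → Set ℝ := fun j => Set.Ico (0:ℝ) 1 ∩
      (fun x => Int.fract (x + (-(j:ℝ) * α)))⁻¹' (Set.Ioo 0 e) with hIoP
  set JoP : ℕ → Set ℝ := fun j => Set.Ico (0:ℝ) 1 ∩
      (fun x => Int.fract (x + (-(j:ℝ) * α)))⁻¹' (Set.Ioo (1-f) 1) with hJoP
  have hImeas : ∀ j, MeasurableSet (IoP j) :=
    fun j => measurableSet_Ico.inter
      ((measurable_fract.comp (measurable_add_const _)) measurableSet_Ioo)
  have hJmeas : ∀ j, MeasurableSet (JoP j) :=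
    fun j => measurableSet_Ico.inter
      ((measurable_fract.comp (measurable_add_const _)) measurableSet_Ioo)
  -- absorption
  have habs : ∀ j : ℕ, q.toNat ≤ j → ∀ x, x ∈ JoP j → x ∈ IoP (j - q.toNat) := by
    rintro j hqj x ⟨hx01, hxJ⟩
    refine ⟨hx01, ?_⟩
    simp only [Set.mem_preimage] at hxJ ⊢
    have hcast : (-(((j - q.toNat : ℕ)):ℝ) * α) = (-(j:ℝ) * α) + (q:ℝ)*α := by
      have h1 : (((j - q.toNat : ℕ)):ℝ) = (j:ℝ) - (q:ℝ) := by
        push_cast [Nat.cast_sub hqj]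
        have : ((q.toNat : ℕ):ℝ) = (q:ℝ) := by exact_mod_cast congrArg (fun z : ℤ => (z:ℝ)) hqtn
        rw [this]
      rw [h1]; ring
    rw [hcast, show x + ((-(j:ℝ) * α) + (q:ℝ)*α) = (x + (-(j:ℝ) * α)) + (q:ℝ)*α by ring,
      ← fract_fract_add]
    obtain ⟨ht1, ht2⟩ := hxJ
    set t := Int.fract (x + (-(j:ℝ) * α)) with htdef
    have h1 : t + (q:ℝ)*α = (t + e) + (p:ℝ) := by linarith [hqα]
    rw [h1]
    have h2 : Int.fract ((t + e) + (p:ℝ)) = Int.fract (t + e) := Int.fract_add_intCast _ _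
    rw [h2]
    have h3 : Int.fract (t + e) = t + e - 1 := by
      rw [← Int.fract_sub_intCast (t + e) 1, Int.cast_one]
      exact Int.fract_eq_self.2 ⟨by linarith, by linarith⟩
    rw [h3]
    exact ⟨by linarith, by linarith⟩
  -- union identity
  have hU : (⋃ j ∈ Finset.range N, (Set.Ico (0:ℝ) 1 ∩
        (fun x => Int.fract (x + (-(j:ℝ) * α)))⁻¹' (Set.Ioo 0 e ∪ Set.Ioo (1-f) 1)))
      = (⋃ j ∈ Finset.range N, IoP j) ∪ (⋃ j ∈ Finset.range M, JoP j) := by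
    apply Set.Subset.antisymm
    · intro x hx
      simp only [Set.mem_iUnion, Finset.mem_range, exists_prop] at hx
      obtain ⟨j, hj, hx01, hxpre⟩ := hx
      rw [Set.mem_preimage, Set.mem_union] at hxpre
      rcases hxpre with hI | hJ
      · exact Set.mem_union_left _
          (Set.mem_biUnion (Finset.mem_range.2 hj) ⟨hx01, hI⟩)
      · by_cases hjM : j < M
        · exact Set.mem_union_right _
            (Set.mem_biUnion (Finset.mem_range.2 hjM) ⟨hx01, hJ⟩)
        · have hqj : q.toNat ≤ j := by omega
          refine Set.mem_union_left _
            (Set.mem_biUnion (Finset.mem_range.2 (by omega : j - q.toNat < N)) ?_)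
          exact habs j hqj x ⟨hx01, hJ⟩
    · intro x hx
      rcases hx with hx | hx <;>
        simp only [Set.mem_iUnion, Finset.mem_range, exists_prop] at hx <;>
        obtain ⟨j, hj, hx01, hxpre⟩ := hx <;>
        simp only [Set.mem_iUnion, Finset.mem_range, exists_prop]
      · exact ⟨j, hj, hx01, Set.mem_union_left _ hxpre⟩
      · exact ⟨j, lt_of_lt_of_le hj hMN, hx01, Set.mem_union_right _ hxpre⟩
  -- pairwise disjointness
  have hdIJ : ∀ j j' : ℕ, j < N → j' < M → Disjoint (IoP j) (JoP j') := by
    intro j j' hj hj'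
    refine Disjoint.mono Set.inter_subset_right Set.inter_subset_right ?_
    refine disj_pre (le_refl 0) he1 (by linarith) (le_refl 1) ?_
    intro r hc
    rw [Set.mem_Ioo] at hc
    refine keyIJ_even (N := (N:ℤ)) hq hqQ hNQ hf hef hefs h2 hqα hdio1
      ((j':ℤ) - (j:ℤ)) (by omega) (by omega) r (Set.mem_Ioo.2 ⟨?_, ?_⟩)
    · push_cast; linarith [hc.1]
    · push_cast; linarith [hc.2]
  have hdII : ∀ j j' : ℕ, j ≠ j' → j < N → j' < N → Disjoint (IoP j) (IoP j') := by
    intro j j' hne hj hj'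
    refine Disjoint.mono Set.inter_subset_right Set.inter_subset_right ?_
    refine disj_pre (le_refl 0) he1 (le_refl 0) he1 ?_
    intro r hc
    rw [Set.mem_Ioo] at hc
    refine keyII hq hf hef hefs h2 hqabs hdio1 hdio2 ((j':ℤ) - (j:ℤ))
      (by omega) (abs_lt.2 ⟨by omega, by omega⟩) r (Set.mem_Ioo.2 ⟨?_, ?_⟩)
    · push_cast; linarith [hc.1]
    · push_cast; linarith [hc.2]
  have hdJJ : ∀ j j' : ℕ, j ≠ j' → j < M → j' < M → Disjoint (JoP j) (JoP j') := by
    intro j j' hne hj hj'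
    refine Disjoint.mono Set.inter_subset_right Set.inter_subset_right ?_
    refine disj_pre (by linarith) (le_refl 1) (by linarith) (le_refl 1) ?_
    intro r hc
    rw [Set.mem_Ioo] at hc
    refine keyJJ hq hqQ hf hef hdio1 ((j':ℤ) - (j:ℤ))
      (by omega) (abs_lt.2 ⟨by omega, by omega⟩) r (Set.mem_Ioo.2 ⟨?_, ?_⟩)
    · push_cast; linarith [hc.1]
    · push_cast; linarith [hc.2]
  have hdisjU : Disjoint (⋃ j ∈ Finset.range N, IoP j) (⋃ j ∈ Finset.range M, JoP j) := by
    rw [Set.disjoint_left]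
    intro x hx hy
    simp only [Set.mem_iUnion, Finset.mem_range, exists_prop] at hx hy
    obtain ⟨j, hj, hxj⟩ := hx
    obtain ⟨j', hj', hyj⟩ := hy
    exact Set.disjoint_left.1 (hdIJ j j' hj hj') hxj hyj
  have hd1 : Set.PairwiseDisjoint ↑(Finset.range N) IoP := by
    intro j hj j' hj' hne
    simp only [Finset.coe_range, Set.mem_Iio] at hj hj'
    exact hdII j j' hne hj hj'
  have hd2 : Set.PairwiseDisjoint ↑(Finset.range M) JoP := by
    intro j hj j' hj' hne
    simp only [Finset.coe_range, Set.mem_Iio] at hj hj'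
    exact hdJJ j j' hne hj hj'
  rw [hU, measure_union hdisjU (Finset.measurableSet_biUnion _ (fun j _ => hJmeas j)),
    measure_biUnion_finset hd1 (fun j _ => hImeas j),
    measure_biUnion_finset hd2 (fun j _ => hJmeas j)]
  have hIvol : ∀ j : ℕ, volume (IoP j) = ENNReal.ofReal e := by
    intro j
    rw [hIoP]
    rw [vol_fract_preimage _ measurableSet_Ioo
      (fun x hx => ⟨le_of_lt hx.1, lt_of_lt_of_le hx.2 he1⟩)]
    rw [Real.volume_Ioo, sub_zero]
  have hJvol : ∀ j : ℕ, volume (JoP j) = ENNReal.ofReal f := by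
    intro j
    rw [hJoP]
    rw [vol_fract_preimage _ measurableSet_Ioo
      (fun x hx => ⟨by linarith [hx.1], hx.2⟩)]
    rw [Real.volume_Ioo, show (1:ℝ) - (1-f) = f by ring]
  rw [Finset.sum_congr rfl (fun j _ => hIvol j), Finset.sum_congr rfl (fun j _ => hJvol j),
    Finset.sum_const, Finset.sum_const, Finset.card_range, Finset.card_range,
    nsmul_eq_mul, nsmul_eq_mul]
  rw [← ENNReal.ofReal_natCast N, ← ENNReal.ofReal_natCast M,
    ← ENNReal.ofReal_mul (Nat.cast_nonneg N), ← ENNReal.ofReal_mul (Nat.cast_nonneg M),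
    ← ENNReal.ofReal_add (by positivity) (by positivity)]
  congr 1
  have hMR : ((min (N:ℤ) q : ℤ):ℝ) = (M:ℝ) := by exact_mod_cast congrArg (fun z : ℤ => (z:ℝ)) hMZ.symm
  rw [hMR]

end MainEven

section MainOdd
variable {α e f : ℝ} {q Q p : ℤ}

lemma vol_main_odd
    (hf : 0 < f) (hef : f < e) (hefs : e + f ≤ 1)
    (hq : 1 ≤ q) (hqQ : q ≤ Q)
    (h2 : q < Q → 2*e + f ≤ 1)
    (hqα : (q:ℝ)*α - p = -e)
    (hdio1 : ∀ d r : ℤ, d ≠ 0 → |d| < Q → |d| ≠ q → e + f ≤ |(d:ℝ)*α - r|)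
    (hdio2 : ∀ r : ℤ, r ≠ p → 1 - e ≤ |(q:ℝ)*α - r|)
    (N : ℕ) (hNQ : (N:ℤ) ≤ Q) :
    volume (⋃ j ∈ Finset.range N, (Set.Ico (0:ℝ) 1 ∩
        (fun x => Int.fract (x + (-(j:ℝ) * α)))⁻¹' (Set.Ioo 0 f ∪ Set.Ioo (1-e) 1)))
      = ENNReal.ofReal ((N:ℝ) * e + ((min (N:ℤ) q : ℤ):ℝ) * f) := by
  have he : 0 < e := lt_trans hf hef
  have he1 : e ≤ 1 := by linarith
  have hf1 : f ≤ 1 := by linarith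
  have hqabs : |(q:ℝ)*α - p| = e := by rw [hqα, abs_neg]; exact abs_of_pos he
  set M : ℕ := min N q.toNat with hM
  have hqtn : ((q.toNat : ℤ)) = q := Int.toNat_of_nonneg (by omega)
  have hMZ : (M:ℤ) = min (N:ℤ) q := by
    rw [hM]; push_cast [Nat.cast_min]; omega
  have hMN : M ≤ N := min_le_left _ _
  have hMq : (M:ℤ) ≤ q := by omega
  set IoP : ℕ → Set ℝ := fun j => Set.Ico (0:ℝ) 1 ∩
      (fun x => Int.fract (x + (-(j:ℝ) * α)))⁻¹' (Set.Ioo (1-e) 1) with hIoP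
  set JoP : ℕ → Set ℝ := fun j => Set.Ico (0:ℝ) 1 ∩
      (fun x => Int.fract (x + (-(j:ℝ) * α)))⁻¹' (Set.Ioo 0 f) with hJoP
  have hImeas : ∀ j, MeasurableSet (IoP j) :=
    fun j => measurableSet_Ico.inter
      ((measurable_fract.comp (measurable_add_const _)) measurableSet_Ioo)
  have hJmeas : ∀ j, MeasurableSet (JoP j) :=
    fun j => measurableSet_Ico.inter
      ((measurable_fract.comp (measurable_add_const _)) measurableSet_Ioo)
  -- absorption
  have habs : ∀ j : ℕ, q.toNat ≤ j → ∀ x, x ∈ JoP j → x ∈ IoP (j - q.toNat) := by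
    rintro j hqj x ⟨hx01, hxJ⟩
    refine ⟨hx01, ?_⟩
    simp only [Set.mem_preimage] at hxJ ⊢
    have hcast : (-(((j - q.toNat : ℕ)):ℝ) * α) = (-(j:ℝ) * α) + (q:ℝ)*α := by
      have h1 : (((j - q.toNat : ℕ)):ℝ) = (j:ℝ) - (q:ℝ) := by
        push_cast [Nat.cast_sub hqj]
        have : ((q.toNat : ℕ):ℝ) = (q:ℝ) := by exact_mod_cast congrArg (fun z : ℤ => (z:ℝ)) hqtn
        rw [this]
      rw [h1]; ring
    rw [hcast, show x + ((-(j:ℝ) * α) + (q:ℝ)*α) = (x + (-(j:ℝ) * α)) + (q:ℝ)*α by ring,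
      ← fract_fract_add]
    obtain ⟨ht1, ht2⟩ := hxJ
    set t := Int.fract (x + (-(j:ℝ) * α)) with htdef
    have h1 : t + (q:ℝ)*α = (t - e) + (p:ℝ) := by linarith [hqα]
    rw [h1]
    have h2 : Int.fract ((t - e) + (p:ℝ)) = Int.fract (t - e) := Int.fract_add_intCast _ _
    rw [h2]
    have h3 : Int.fract (t - e) = t - e + 1 := by
      rw [← Int.fract_add_intCast (t - e) 1, Int.cast_one]
      exact Int.fract_eq_self.2 ⟨by linarith, by linarith⟩
    rw [h3]
    exact ⟨by linarith, by linarith⟩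
  -- union identity
  have hU : (⋃ j ∈ Finset.range N, (Set.Ico (0:ℝ) 1 ∩
        (fun x => Int.fract (x + (-(j:ℝ) * α)))⁻¹' (Set.Ioo 0 f ∪ Set.Ioo (1-e) 1)))
      = (⋃ j ∈ Finset.range N, IoP j) ∪ (⋃ j ∈ Finset.range M, JoP j) := by
    apply Set.Subset.antisymm
    · intro x hx
      simp only [Set.mem_iUnion, Finset.mem_range, exists_prop] at hx
      obtain ⟨j, hj, hx01, hxpre⟩ := hx
      rw [Set.mem_preimage, Set.mem_union] at hxpre
      rcases hxpre with hJ | hI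
      · by_cases hjM : j < M
        · exact Set.mem_union_right _
            (Set.mem_biUnion (Finset.mem_range.2 hjM) ⟨hx01, hJ⟩)
        · have hqj : q.toNat ≤ j := by omega
          refine Set.mem_union_left _
            (Set.mem_biUnion (Finset.mem_range.2 (by omega : j - q.toNat < N)) ?_)
          exact habs j hqj x ⟨hx01, hJ⟩
      · exact Set.mem_union_left _
          (Set.mem_biUnion (Finset.mem_range.2 hj) ⟨hx01, hI⟩)
    · intro x hx
      rcases hx with hx | hx <;>
        simp only [Set.mem_iUnion, Finset.mem_range, exists_prop] at hx <;>
        obtain ⟨j, hj, hx01, hxpre⟩ := hx <;>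
        simp only [Set.mem_iUnion, Finset.mem_range, exists_prop]
      · exact ⟨j, hj, hx01, Set.mem_union_right _ hxpre⟩
      · exact ⟨j, lt_of_lt_of_le hj hMN, hx01, Set.mem_union_left _ hxpre⟩
  -- pairwise disjointness
  have hdIJ : ∀ j j' : ℕ, j < N → j' < M → Disjoint (IoP j) (JoP j') := by
    intro j j' hj hj'
    refine Disjoint.mono Set.inter_subset_right Set.inter_subset_right ?_
    refine disj_pre (by linarith) (le_refl 1) (le_refl 0) hf1 ?_
    intro r hc
    rw [Set.mem_Ioo] at hc
    refine keyIJ_odd (N := (N:ℤ)) hq hqQ hNQ hf hef hefs h2 hqα hdio1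
      ((j':ℤ) - (j:ℤ)) (by omega) (by omega) r (Set.mem_Ioo.2 ⟨?_, ?_⟩)
    · push_cast; linarith [hc.1]
    · push_cast; linarith [hc.2]
  have hdII : ∀ j j' : ℕ, j ≠ j' → j < N → j' < N → Disjoint (IoP j) (IoP j') := by
    intro j j' hne hj hj'
    refine Disjoint.mono Set.inter_subset_right Set.inter_subset_right ?_
    refine disj_pre (by linarith) (le_refl 1) (by linarith) (le_refl 1) ?_
    intro r hc
    rw [Set.mem_Ioo] at hc
    refine keyII hq hf hef hefs h2 hqabs hdio1 hdio2 ((j':ℤ) - (j:ℤ))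
      (by omega) (abs_lt.2 ⟨by omega, by omega⟩) r (Set.mem_Ioo.2 ⟨?_, ?_⟩)
    · push_cast; linarith [hc.1]
    · push_cast; linarith [hc.2]
  have hdJJ : ∀ j j' : ℕ, j ≠ j' → j < M → j' < M → Disjoint (JoP j) (JoP j') := by
    intro j j' hne hj hj'
    refine Disjoint.mono Set.inter_subset_right Set.inter_subset_right ?_
    refine disj_pre (le_refl 0) hf1 (le_refl 0) hf1 ?_
    intro r hc
    rw [Set.mem_Ioo] at hc
    refine keyJJ hq hqQ hf hef hdio1 ((j':ℤ) - (j:ℤ))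
      (by omega) (abs_lt.2 ⟨by omega, by omega⟩) r (Set.mem_Ioo.2 ⟨?_, ?_⟩)
    · push_cast; linarith [hc.1]
    · push_cast; linarith [hc.2]
  have hdisjU : Disjoint (⋃ j ∈ Finset.range N, IoP j) (⋃ j ∈ Finset.range M, JoP j) := by
    rw [Set.disjoint_left]
    intro x hx hy
    simp only [Set.mem_iUnion, Finset.mem_range, exists_prop] at hx hy
    obtain ⟨j, hj, hxj⟩ := hx
    obtain ⟨j', hj', hyj⟩ := hy
    exact Set.disjoint_left.1 (hdIJ j j' hj hj') hxj hyj
  have hd1 : Set.PairwiseDisjoint ↑(Finset.range N) IoP := by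
    intro j hj j' hj' hne
    simp only [Finset.coe_range, Set.mem_Iio] at hj hj'
    exact hdII j j' hne hj hj'
  have hd2 : Set.PairwiseDisjoint ↑(Finset.range M) JoP := by
    intro j hj j' hj' hne
    simp only [Finset.coe_range, Set.mem_Iio] at hj hj'
    exact hdJJ j j' hne hj hj'
  rw [hU, measure_union hdisjU (Finset.measurableSet_biUnion _ (fun j _ => hJmeas j)),
    measure_biUnion_finset hd1 (fun j _ => hImeas j),
    measure_biUnion_finset hd2 (fun j _ => hJmeas j)]
  have hIvol : ∀ j : ℕ, volume (IoP j) = ENNReal.ofReal e := by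
    intro j
    rw [hIoP]
    rw [vol_fract_preimage _ measurableSet_Ioo
      (fun x hx => ⟨by linarith [hx.1], hx.2⟩)]
    rw [Real.volume_Ioo, show (1:ℝ) - (1-e) = e by ring]
  have hJvol : ∀ j : ℕ, volume (JoP j) = ENNReal.ofReal f := by
    intro j
    rw [hJoP]
    rw [vol_fract_preimage _ measurableSet_Ioo
      (fun x hx => ⟨le_of_lt hx.1, lt_of_lt_of_le hx.2 hf1⟩)]
    rw [Real.volume_Ioo, sub_zero]
  rw [Finset.sum_congr rfl (fun j _ => hIvol j), Finset.sum_congr rfl (fun j _ => hJvol j),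
    Finset.sum_const, Finset.sum_const, Finset.card_range, Finset.card_range,
    nsmul_eq_mul, nsmul_eq_mul]
  rw [← ENNReal.ofReal_natCast N, ← ENNReal.ofReal_natCast M,
    ← ENNReal.ofReal_mul (Nat.cast_nonneg N), ← ENNReal.ofReal_mul (Nat.cast_nonneg M),
    ← ENNReal.ofReal_add (by positivity) (by positivity)]
  congr 1
  have hMR : ((min (N:ℤ) q : ℤ):ℝ) = (M:ℝ) := by exact_mod_cast congrArg (fun z : ℤ => (z:ℝ)) hMZ.symm
  rw [hMR]

end MainOdd





lemma entry_eq_sInf {T : ℝ → ℝ} {B : Set ℝ} {x : ℝ}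
    (hA : {n : ℕ | 1 ≤ n ∧ T^[n] x ∈ B}.Nonempty) :
    entryTime T B x = ((sInf {n : ℕ | 1 ≤ n ∧ T^[n] x ∈ B} : ℕ) : ℕ∞) := by
  apply le_antisymm
  · exact csInf_le (OrderBot.bddBelow _) ⟨_, Nat.sInf_mem hA, rfl⟩
  · apply le_csInf (hA.image _)
    rintro b ⟨m, hm, rfl⟩
    show ((sInf {n : ℕ | 1 ≤ n ∧ T^[n] x ∈ B} : ℕ) : ℕ∞) ≤ (m : ℕ∞)
    exact_mod_cast Nat.sInf_le hm

lemma target_eq (α : ℝ) (B : Set ℝ) (s : ℝ) :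
    {x : ℝ | ∃ n : ℕ, entryTime (rot α) B x = (n : ℕ∞) ∧ (n : ℝ) ≤ s}
      = {x : ℝ | ∃ m : ℕ, 1 ≤ m ∧ (m : ℝ) ≤ s ∧ (rot α)^[m] x ∈ B} := by
  ext x
  simp only [Set.mem_setOf_eq]
  constructor
  · rintro ⟨n, hn, hns⟩
    have hA : {m : ℕ | 1 ≤ m ∧ (rot α)^[m] x ∈ B}.Nonempty := by
      by_contra h
      rw [Set.not_nonempty_iff_eq_empty] at h
      rw [entryTime, h] at hn
      simp at hn
    rw [entry_eq_sInf hA] at hn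
    have hn' : n = sInf {m : ℕ | 1 ≤ m ∧ (rot α)^[m] x ∈ B} := by exact_mod_cast hn.symm
    obtain ⟨h1, h2⟩ := Nat.sInf_mem hA
    rw [hn'] at hns
    exact ⟨_, h1, hns, h2⟩
  · rintro ⟨m, hm1, hms, hmB⟩
    have hA : {m : ℕ | 1 ≤ m ∧ (rot α)^[m] x ∈ B}.Nonempty := ⟨m, hm1, hmB⟩
    refine ⟨sInf {m : ℕ | 1 ≤ m ∧ (rot α)^[m] x ∈ B}, entry_eq_sInf hA, ?_⟩
    have : sInf {m : ℕ | 1 ≤ m ∧ (rot α)^[m] x ∈ B} ≤ m := Nat.sInf_le ⟨hm1, hmB⟩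
    calc ((sInf {m : ℕ | 1 ≤ m ∧ (rot α)^[m] x ∈ B} : ℕ):ℝ) ≤ (m:ℝ) := by exact_mod_cast this
      _ ≤ s := hms

lemma rot_iter (α x : ℝ) : ∀ m : ℕ, (rot α)^[m+1] x = Int.fract (x + ((m:ℝ)+1) * α) := by
  intro m
  induction m with
  | zero => simp [rot]
  | succ n ih =>
    rw [Function.iterate_succ_apply', ih, rot, fract_fract_add]
    congr 1
    push_cast
    ring


lemma vol_E (α : ℝ) (B : Set ℝ) (hB : MeasurableSet B) (hB1 : B ⊆ Set.Ico 0 1) (N : ℕ) :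
    volume (Set.Ico (0:ℝ) 1 ∩ {x | ∃ m : ℕ, 1 ≤ m ∧ m ≤ N ∧ Int.fract (x + (m:ℝ)*α) ∈ B})
      = volume (⋃ j ∈ Finset.range N,
          (Set.Ico (0:ℝ) 1 ∩ (fun y => Int.fract (y + (-(j:ℝ) * α)))⁻¹' B)) := by
  set D := ⋃ j ∈ Finset.range N,
      (Set.Ico (0:ℝ) 1 ∩ (fun y => Int.fract (y + (-(j:ℝ) * α)))⁻¹' B) with hD
  have hDmeas : MeasurableSet D :=
    Finset.measurableSet_biUnion _
      (fun j _ => measurableSet_Ico.inter ((measurable_fract.comp (measurable_add_const _)) hB))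
  have hDsub : D ⊆ Set.Ico 0 1 := by
    intro x hx
    simp only [hD, Set.mem_iUnion, exists_prop] at hx
    obtain ⟨j, _, h, _⟩ := hx
    exact h
  have hset : Set.Ico (0:ℝ) 1 ∩ {x | ∃ m : ℕ, 1 ≤ m ∧ m ≤ N ∧ Int.fract (x + (m:ℝ)*α) ∈ B}
      = Set.Ico (0:ℝ) 1 ∩ (fun x => Int.fract (x + (N:ℝ)*α))⁻¹' D := by
    ext x
    simp only [Set.mem_inter_iff, Set.mem_setOf_eq, Set.mem_preimage, hD, Set.mem_iUnion,
      Finset.mem_range, exists_prop]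
    constructor
    · rintro ⟨hx01, m, hm1, hmN, hmB⟩
      refine ⟨hx01, N - m, by omega, ⟨Int.fract_nonneg _, Int.fract_lt_one _⟩, ?_⟩
      rw [fract_fract_add]
      have heq : x + (N:ℝ)*α + (-(((N - m : ℕ)):ℝ) * α) = x + (m:ℝ)*α := by
        push_cast [Nat.cast_sub hmN]; ring
      rw [heq]; exact hmB
    · rintro ⟨hx01, j, hjN, _, hjB⟩
      refine ⟨hx01, N - j, by omega, by omega, ?_⟩
      rw [fract_fract_add] at hjB
      have heq : x + (N:ℝ)*α + (-(j:ℝ) * α) = x + (((N - j : ℕ)):ℝ)*α := by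
        push_cast [Nat.cast_sub (le_of_lt hjN)]; ring
      rw [heq] at hjB; exact hjB
  rw [hset]
  exact vol_fract_preimage _ hDmeas hDsub

lemma Bset_subset {α : ℝ} (hirr : Irrational α) (hα : α ∈ Set.Ioo (0:ℝ) 1) (k : ℕ) :
    Bset α k ⊆ Set.Ico 0 1 := by
  have h1 : cfEta α k ≤ 1 := le_of_lt (cfEta_lt_one hirr hα k)
  have h2 : cfEta α (k+1) ≤ 1 := le_of_lt (cfEta_lt_one hirr hα (k+1))
  rw [Bset]
  split_ifs
  · rintro x (hx | hx)
    · exact ⟨le_of_lt hx.1, lt_of_lt_of_le hx.2 h1⟩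
    · exact ⟨by linarith [hx.1], hx.2⟩
  · rintro x (hx | hx)
    · exact ⟨le_of_lt hx.1, lt_of_lt_of_le hx.2 h2⟩
    · exact ⟨by linarith [hx.1], hx.2⟩

lemma Bset_meas (α : ℝ) (k : ℕ) : MeasurableSet (Bset α k) := by
  rw [Bset]
  split_ifs <;> exact measurableSet_Ioo.union measurableSet_Ioo

lemma vol_final {α : ℝ} (hirr : Irrational α) (hα : α ∈ Set.Ioo (0:ℝ) 1) (k : ℕ)
    (N : ℕ) (hNQ : (N:ℤ) ≤ cfQ α (k+1)) :
    volume (Set.Ico (0:ℝ) 1 ∩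
        {x | ∃ m : ℕ, 1 ≤ m ∧ m ≤ N ∧ Int.fract (x + (m:ℝ)*α) ∈ Bset α k})
      = ENNReal.ofReal ((N:ℝ) * cfEta α k
          + ((min (N:ℤ) (cfQ α k) : ℤ):ℝ) * cfEta α (k+1)) := by
  rw [vol_E α _ (Bset_meas α k) (Bset_subset hirr hα k) N]
  have hf := cfEta_pos hirr hα (k+1)
  have hef := cfEta_succ_lt hirr hα k
  have hone := one_eq hirr hα k
  have hq := cfQ_one_le hirr hα k
  have hQ := cfQ_one_le hirr hα (k+1)
  have hqQ := cfQ_mono hirr hα k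
  have hqR : (1:ℝ) ≤ (cfQ α k : ℝ) := by exact_mod_cast hq
  have hQR : (1:ℝ) ≤ (cfQ α (k+1) : ℝ) := by exact_mod_cast hQ
  have he : 0 < cfEta α k := cfEta_pos hirr hα k
  have hefs : cfEta α k + cfEta α (k+1) ≤ 1 := by nlinarith
  have h2 : cfQ α k < cfQ α (k+1) → 2 * cfEta α k + cfEta α (k+1) ≤ 1 := by
    intro h
    have h1 : (cfQ α k : ℝ) + 1 ≤ (cfQ α (k+1) : ℝ) := by exact_mod_cast h
    nlinarith
  rcases Nat.even_or_odd k with hk | hk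
  · have hBeq : Bset α k
        = Set.Ioo 0 (cfEta α k) ∪ Set.Ioo (1 - cfEta α (k + 1)) 1 := if_pos hk
    rw [hBeq]
    have hsign : (cfQ α k : ℝ) * α - (cfP α k : ℝ) = cfEta α k := by
      have := qk_sign hirr hα k
      rwa [Even.neg_one_pow hk, one_mul] at this
    exact vol_main_even hf hef hefs hq hqQ h2 hsign (dio1 hirr hα k) (dio2 hirr hα k) N hNQ
  · have hBeq : Bset α k
        = Set.Ioo 0 (cfEta α (k + 1)) ∪ Set.Ioo (1 - cfEta α k) 1 := if_neg (by
          simpa using hk)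
    rw [hBeq]
    have hsign : (cfQ α k : ℝ) * α - (cfP α k : ℝ) = -cfEta α k := by
      have := qk_sign hirr hα k
      rwa [Odd.neg_one_pow hk, neg_one_mul] at this
    exact vol_main_odd hf hef hefs hq hqQ h2 hsign (dio1 hirr hα k) (dio2 hirr hα k) N hNQ

lemma set_eq_fin (α : ℝ) (B : Set ℝ) (s : ℝ) (hs : 0 ≤ s) :
    Set.Ico (0:ℝ) 1 ∩ {x | ∃ n : ℕ, entryTime (rot α) B x = (n : ℕ∞) ∧ (n : ℝ) ≤ s}
      = Set.Ico (0:ℝ) 1 ∩ {x | ∃ m : ℕ, 1 ≤ m ∧ m ≤ (⌊s⌋).toNat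
          ∧ Int.fract (x + (m:ℝ)*α) ∈ B} := by
  rw [target_eq]
  have hfl : (0:ℤ) ≤ ⌊s⌋ := Int.floor_nonneg.2 hs
  ext x
  simp only [Set.mem_inter_iff, Set.mem_setOf_eq]
  refine and_congr_right fun hx01 => ?_
  constructor
  · rintro ⟨m, hm1, hms, hmB⟩
    refine ⟨m, hm1, ?_, ?_⟩
    · have h1 : (m:ℤ) ≤ ⌊s⌋ := Int.le_floor.2 (by exact_mod_cast hms)
      omega
    · obtain ⟨m', rfl⟩ : ∃ m', m = m' + 1 := ⟨m - 1, by omega⟩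
      rw [rot_iter] at hmB
      rw [show (((m' + 1 : ℕ)):ℝ) = (m':ℝ) + 1 by push_cast; ring]
      exact hmB
  · rintro ⟨m, hm1, hmN, hmB⟩
    refine ⟨m, hm1, ?_, ?_⟩
    · have h1 : (m:ℤ) ≤ ⌊s⌋ := by omega
      have h2 := Int.le_floor.1 h1
      exact_mod_cast h2
    · obtain ⟨m', rfl⟩ : ∃ m', m = m' + 1 := ⟨m - 1, by omega⟩
      rw [rot_iter,
        show (x + ((m':ℝ) + 1) * α) = x + (((m' + 1 : ℕ)):ℝ) * α by push_cast; ring]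
      exact hmB

theorem stmt8 (α : ℝ) (hirr : Irrational α) (hα : α ∈ Set.Ioo (0 : ℝ) 1) (k : ℕ) (s : ℝ) :
    ((cfQ α (k + 1) : ℝ) ≤ s →
      (μrot {x | ∃ n : ℕ, entryTime (rot α) (Bset α k) x = (n : ℕ∞) ∧ (n : ℝ) ≤ s}).toReal
        = 1) ∧
    ((cfQ α k : ℝ) ≤ s → s < (cfQ α (k + 1) : ℝ) →
      (μrot {x | ∃ n : ℕ, entryTime (rot α) (Bset α k) x = (n : ℕ∞) ∧ (n : ℝ) ≤ s}).toReal
        = (cfQ α k : ℝ) * cfEta α (k + 1) + cfEta α k * (⌊s⌋ : ℝ)) ∧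
    (0 ≤ s → s < (cfQ α k : ℝ) →
      (μrot {x | ∃ n : ℕ, entryTime (rot α) (Bset α k) x = (n : ℕ∞) ∧ (n : ℝ) ≤ s}).toReal
        = (cfEta α k + cfEta α (k + 1)) * (⌊s⌋ : ℝ)) := by
  have hq := cfQ_one_le hirr hα k
  have hQ := cfQ_one_le hirr hα (k+1)
  have hqQ := cfQ_mono hirr hα k
  have hqR : (1:ℝ) ≤ (cfQ α k : ℝ) := by exact_mod_cast hq
  have hQR : (1:ℝ) ≤ (cfQ α (k+1) : ℝ) := by exact_mod_cast hQ
  have he := cfEta_pos hirr hα k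
  have hf := cfEta_pos hirr hα (k+1)
  have hrestrict : ∀ S : Set ℝ, μrot S = volume (Set.Ico (0:ℝ) 1 ∩ S) := by
    intro S
    rw [μrot, Measure.restrict_apply' measurableSet_Ico, Set.inter_comm]
  refine ⟨?_, ?_, ?_⟩
  · -- s ≥ q_{k+1}
    intro h1
    have hs0 : (0:ℝ) ≤ s := by linarith
    set N : ℕ := (cfQ α (k+1)).toNat with hN
    have hNZ : (N:ℤ) = cfQ α (k+1) := Int.toNat_of_nonneg (by omega)
    rw [hrestrict]
    have hvol : volume (Set.Ico (0:ℝ) 1 ∩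
        {x | ∃ n : ℕ, entryTime (rot α) (Bset α k) x = (n : ℕ∞) ∧ (n : ℝ) ≤ s}) = 1 := by
      apply le_antisymm
      · refine le_trans (measure_mono Set.inter_subset_left) (le_of_eq ?_)
        rw [Real.volume_Ico, sub_zero, ENNReal.ofReal_one]
      have hsub : Set.Ico (0:ℝ) 1 ∩
          {x | ∃ m : ℕ, 1 ≤ m ∧ m ≤ N ∧ Int.fract (x + (m:ℝ)*α) ∈ Bset α k}
          ⊆ Set.Ico (0:ℝ) 1 ∩
          {x | ∃ n : ℕ, entryTime (rot α) (Bset α k) x = (n : ℕ∞) ∧ (n : ℝ) ≤ s} := by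
        rw [target_eq]
        rintro x ⟨hx01, m, hm1, hmN, hmB⟩
        refine ⟨hx01, m, hm1, ?_, ?_⟩
        · have h2 : (m:ℤ) ≤ cfQ α (k+1) := by omega
          have h3 : (m:ℝ) ≤ (cfQ α (k+1):ℝ) := by exact_mod_cast h2
          linarith
        · obtain ⟨m', rfl⟩ : ∃ m', m = m' + 1 := ⟨m - 1, by omega⟩
          rw [rot_iter,
            show (x + ((m':ℝ) + 1) * α) = x + (((m' + 1 : ℕ)):ℝ) * α by push_cast; ring]
          exact hmB
      have hlow := measure_mono (μ := volume) hsub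
      rw [vol_final hirr hα k N (by omega)] at hlow
      have hmin : min (N:ℤ) (cfQ α k) = cfQ α k := by omega
      rw [hmin] at hlow
      have hval : ((N:ℕ):ℝ) * cfEta α k + ((cfQ α k : ℤ):ℝ) * cfEta α (k+1) = 1 := by
        have hcast : ((N:ℕ):ℝ) = ((cfQ α (k+1) : ℤ):ℝ) := by exact_mod_cast hNZ
        rw [hcast]
        exact one_eq hirr hα k
      rw [hval, ENNReal.ofReal_one] at hlow
      exact hlow
    rw [hvol]
    exact ENNReal.toReal_one
  · -- q_k ≤ s < q_{k+1}
    intro h1 h2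
    have hs0 : (0:ℝ) ≤ s := by linarith
    set N : ℕ := (⌊s⌋).toNat with hN
    have hfl0 : (0:ℤ) ≤ ⌊s⌋ := Int.floor_nonneg.2 hs0
    have hNZ : (N:ℤ) = ⌊s⌋ := Int.toNat_of_nonneg hfl0
    have hflQ : ⌊s⌋ < cfQ α (k+1) := Int.floor_lt.2 h2
    have hqfl : cfQ α k ≤ ⌊s⌋ := Int.le_floor.2 h1
    rw [hrestrict, set_eq_fin α (Bset α k) s hs0,
      vol_final hirr hα k N (by omega)]
    have hmin : min (N:ℤ) (cfQ α k) = cfQ α k := by omega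
    rw [hmin]
    have hNR : ((N:ℕ):ℝ) = ((⌊s⌋:ℤ):ℝ) := by exact_mod_cast hNZ
    rw [ENNReal.toReal_ofReal (by nlinarith [(by exact_mod_cast hfl0 : (0:ℝ) ≤ ((⌊s⌋:ℤ):ℝ)), hNR]), hNR]
    ring
  · -- 0 ≤ s < q_k
    intro h1 h2
    set N : ℕ := (⌊s⌋).toNat with hN
    have hfl0 : (0:ℤ) ≤ ⌊s⌋ := Int.floor_nonneg.2 h1
    have hNZ : (N:ℤ) = ⌊s⌋ := Int.toNat_of_nonneg hfl0
    have hflq : ⌊s⌋ < cfQ α k := Int.floor_lt.2 h2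
    rw [hrestrict, set_eq_fin α (Bset α k) s h1,
      vol_final hirr hα k N (by omega)]
    have hmin : min (N:ℤ) (cfQ α k) = (N:ℤ) := by omega
    rw [hmin]
    have hNR : ((N:ℕ):ℝ) = ((⌊s⌋:ℤ):ℝ) := by exact_mod_cast hNZ
    have hNR' : (((N:ℤ)):ℝ) = ((⌊s⌋:ℤ):ℝ) := by exact_mod_cast hNZ
    rw [ENNReal.toReal_ofReal (by nlinarith [(by exact_mod_cast hfl0 : (0:ℝ) ≤ ((⌊s⌋:ℤ):ℝ)), hNR, hNR']),
      hNR, hNR']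
    ring
end

section
/- Suppose along an infinite set K ⊆ ℕ the limits γ_j = lim_{k ∈ K} q_{k+j}/q_k and δ_j = lim_{k ∈ K} η_{k+j}/η_k exist for all j ≥ 0 with γ_1, δ_1 finite. Then for every j ≥ 0, lim_{k ∈ K} q_k (η_{k+j} + η_{k+j+1}) = (δ_j + δ_{j+1})/(γ_1 + δ_1). -/
open MeasureTheory Filter Set Topology

lemma cfTail_prop {α : ℝ} (hirr : Irrational α) (hα : α ∈ Set.Ioo (0 : ℝ) 1) :
    ∀ k, Irrational (cfTail α k) ∧ cfTail α k ∈ Set.Ioo (0:ℝ) 1 := by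
  intro k
  induction k with
  | zero => exact ⟨hirr, hα⟩
  | succ n ih =>
    obtain ⟨hi, h0, h1⟩ := ih
    have hinv : Irrational (1 / cfTail α n) := by rw [one_div]; exact hi.inv
    have hfr : Irrational (Int.fract (1 / cfTail α n)) := by
      unfold Int.fract; exact hinv.sub_intCast _
    have heq : cfTail α (n+1) = Int.fract (1 / cfTail α n) := rfl
    refine ⟨by rw [heq]; exact hfr, ?_, ?_⟩
    · rw [heq]
      exact lt_of_le_of_ne (Int.fract_nonneg _) (Ne.symm hfr.ne_zero)
    · rw [heq]; exact Int.fract_lt_one _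

lemma cfC_pos {α : ℝ} (hirr : Irrational α) (hα : α ∈ Set.Ioo (0 : ℝ) 1) :
    ∀ k, 1 ≤ cfC α k := by
  intro k
  obtain ⟨_, h0, h1⟩ := cfTail_prop hirr hα k
  have h : (1:ℝ) ≤ 1 / cfTail α k := by
    rw [le_div_iff₀ h0]; linarith
  exact Int.le_floor.2 (by exact_mod_cast h)

lemma cfQ_pos_mono {α : ℝ} (hirr : Irrational α) (hα : α ∈ Set.Ioo (0 : ℝ) 1) :
    ∀ k, 1 ≤ cfQ α k ∧ cfQ α k ≤ cfQ α (k+1) := by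
  intro k
  induction k with
  | zero =>
    refine ⟨le_refl _, ?_⟩
    have h0 : cfQ α 0 = 1 := rfl
    have h1 : cfQ α 1 = cfC α 0 := rfl
    rw [h0, h1]; exact cfC_pos hirr hα 0
  | succ n ih =>
    obtain ⟨h1, h2⟩ := ih
    have h1' : 1 ≤ cfQ α (n+1) := le_trans h1 h2
    have hc : 1 ≤ cfC α (n+1) := cfC_pos hirr hα (n+1)
    refine ⟨h1', ?_⟩
    have h3 : cfQ α (n+2) = cfC α (n+1) * cfQ α (n+1) + cfQ α n := rfl
    rw [h3]; nlinarith

noncomputable def prodT (α : ℝ) (k : ℕ) : ℝ := ∏ i ∈ Finset.range (k+1), cfTail α i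

lemma prodT_pos {α : ℝ} (hirr : Irrational α) (hα : α ∈ Set.Ioo (0 : ℝ) 1) :
    ∀ k, 0 < prodT α k :=
  fun k => Finset.prod_pos fun i _ => (cfTail_prop hirr hα i).2.1

lemma key_E {α : ℝ} (hirr : Irrational α) (hα : α ∈ Set.Ioo (0 : ℝ) 1) :
    ∀ k, (cfQ α k : ℝ) * α - (cfP α k : ℝ) = (-1)^k * prodT α k := by
  intro k
  induction k using Nat.twoStepInduction with
  | zero =>
    have h0 : cfQ α 0 = 1 := rfl
    have h0' : cfP α 0 = 0 := rfl
    have hp : prodT α 0 = cfTail α 0 := by simp [prodT]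
    have ht0 : cfTail α 0 = α := rfl
    rw [h0, h0', hp, ht0]
    push_cast
    ring
  | one =>
    have hne : α ≠ 0 := ne_of_gt hα.1
    have h1 : cfQ α 1 = cfC α 0 := rfl
    have h1' : cfP α 1 = 1 := rfl
    have ht1 : cfTail α 1 = 1/α - (cfC α 0 : ℝ) := by
      show Int.fract (1 / cfTail α 0) = 1/α - (cfC α 0 : ℝ)
      rw [Int.fract]; rfl
    have ht0 : cfTail α 0 = α := rfl
    have hp : prodT α 1 = α * cfTail α 1 := by
      rw [prodT, Finset.prod_range_succ, Finset.prod_range_one, ht0]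
    rw [h1, h1', hp, ht1]
    push_cast
    field_simp
    ring
  | more k ihk ihk1 =>
    have hne : cfTail α (k+1) ≠ 0 := ne_of_gt (cfTail_prop hirr hα (k+1)).2.1
    have ht2 : cfTail α (k+2) = 1/cfTail α (k+1) - (cfC α (k+1) : ℝ) := by
      show Int.fract (1 / cfTail α (k+1)) = _
      rw [Int.fract]; rfl
    have hP2 : prodT α (k+2) = prodT α (k+1) * cfTail α (k+2) := by
      simp [prodT, Finset.prod_range_succ]
    have hP1 : prodT α (k+1) = prodT α k * cfTail α (k+1) := by
      simp [prodT, Finset.prod_range_succ]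
    have hstep : prodT α (k+2) = prodT α k - (cfC α (k+1):ℝ) * prodT α (k+1) := by
      rw [hP2, ht2, hP1]; field_simp
    have hQ : (cfQ α (k+2) : ℝ) = (cfC α (k+1) : ℝ) * (cfQ α (k+1) : ℝ) + (cfQ α k : ℝ) := by
      have : cfQ α (k+2) = cfC α (k+1) * cfQ α (k+1) + cfQ α k := rfl
      rw [this]; push_cast; ring
    have hp : (cfP α (k+2) : ℝ) = (cfC α (k+1) : ℝ) * (cfP α (k+1) : ℝ) + (cfP α k : ℝ) := by
      have : cfP α (k+2) = cfC α (k+1) * cfP α (k+1) + cfP α k := rfl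
      rw [this]; push_cast; ring
    rw [hQ, hp, hstep, pow_succ, pow_succ]
    rw [pow_succ] at ihk1
    linear_combination (cfC α (k+1):ℝ) * ihk1 + ihk

lemma key_D (α : ℝ) : ∀ k, cfP α (k+1) * cfQ α k - cfP α k * cfQ α (k+1) = (-1)^k := by
  intro k
  induction k with
  | zero => simp [cfP, cfQ]
  | succ n ih =>
    have hp : cfP α (n+2) = cfC α (n+1) * cfP α (n+1) + cfP α n := rfl
    have hq : cfQ α (n+2) = cfC α (n+1) * cfQ α (n+1) + cfQ α n := rfl
    rw [hp, hq, pow_succ]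
    linear_combination (-1 : ℤ) * ih

lemma eta_eq {α : ℝ} (hirr : Irrational α) (hα : α ∈ Set.Ioo (0 : ℝ) 1) :
    ∀ k, cfEta α k = prodT α k := by
  intro k
  rw [cfEta, key_E hirr hα k, abs_mul, abs_pow, abs_neg, abs_one, one_pow, one_mul,
    abs_of_pos (prodT_pos hirr hα k)]

lemma eta_pos {α : ℝ} (hirr : Irrational α) (hα : α ∈ Set.Ioo (0 : ℝ) 1) :
    ∀ k, 0 < cfEta α k := by
  intro k; rw [eta_eq hirr hα k]; exact prodT_pos hirr hα k

lemma one_identity {α : ℝ} (hirr : Irrational α) (hα : α ∈ Set.Ioo (0 : ℝ) 1) :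
    ∀ k, (cfQ α (k+1) : ℝ) * cfEta α k + (cfQ α k : ℝ) * cfEta α (k+1) = 1 := by
  intro k
  have hD : ((cfP α (k+1) : ℝ) * (cfQ α k : ℝ) - (cfP α k : ℝ) * (cfQ α (k+1) : ℝ)) = (-1)^k := by
    exact_mod_cast congrArg (Int.cast : ℤ → ℝ) (key_D α k)
  have hEk := key_E hirr hα k
  have hEk1 := key_E hirr hα (k+1)
  rw [eta_eq hirr hα k, eta_eq hirr hα (k+1)]
  rcases Nat.even_or_odd k with he | ho
  · have e1 : ((-1:ℝ))^k = 1 := he.neg_one_pow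
    have e2 : ((-1:ℝ))^(k+1) = -1 := (he.add_one).neg_one_pow
    rw [e1, one_mul] at hEk
    rw [e2] at hEk1
    rw [e1] at hD
    linear_combination (-(cfQ α (k+1):ℝ)) * hEk + (cfQ α k : ℝ) * hEk1 + hD
  · have e1 : ((-1:ℝ))^k = -1 := ho.neg_one_pow
    have e2 : ((-1:ℝ))^(k+1) = 1 := (ho.add_one).neg_one_pow
    rw [e1] at hEk
    rw [e2, one_mul] at hEk1
    rw [e1] at hD
    linear_combination (cfQ α (k+1):ℝ) * hEk + (-(cfQ α k : ℝ)) * hEk1 - hD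

theorem stmt9 (α : ℝ) (hirr : Irrational α) (hα : α ∈ Set.Ioo (0 : ℝ) 1)
    (K : Set ℕ) (hK : K.Infinite) (γ δ : ℕ → ℝ)
    (hγ : ∀ j : ℕ, Tendsto (fun k => (cfQ α (k + j) : ℝ) / (cfQ α k : ℝ))
      (atTop ⊓ 𝓟 K) (𝓝 (γ j)))
    (hδ : ∀ j : ℕ, Tendsto (fun k => cfEta α (k + j) / cfEta α k)
      (atTop ⊓ 𝓟 K) (𝓝 (δ j)))
    (j : ℕ) :
    Tendsto (fun k => (cfQ α k : ℝ) * (cfEta α (k + j) + cfEta α (k + j + 1)))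
      (atTop ⊓ 𝓟 K) (𝓝 ((δ j + δ (j + 1)) / (γ 1 + δ 1))) := by
  haveI hne : (atTop ⊓ 𝓟 K).NeBot := by
    rw [inf_principal_neBot_iff]
    intro U hU
    obtain ⟨a, ha⟩ := mem_atTop_sets.1 hU
    obtain ⟨b, hbK, hab⟩ := hK.exists_gt a
    exact ⟨b, ha b hab.le, hbK⟩
  have hqpos : ∀ k, (0:ℝ) < (cfQ α k : ℝ) := by
    intro k
    have := (cfQ_pos_mono hirr hα k).1
    exact_mod_cast lt_of_lt_of_le zero_lt_one (by exact_mod_cast this)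
  have hηpos : ∀ k, (0:ℝ) < cfEta α k := eta_pos hirr hα
  have hγ1 : 1 ≤ γ 1 := by
    refine ge_of_tendsto' (hγ 1) fun k => ?_
    rw [le_div_iff₀ (hqpos k), one_mul]
    exact_mod_cast (cfQ_pos_mono hirr hα k).2
  have hδ1 : 0 ≤ δ 1 :=
    ge_of_tendsto' (hδ 1) fun k => div_nonneg (hηpos _).le (hηpos _).le
  have hsumne : γ 1 + δ 1 ≠ 0 := by positivity
  have hsum : Tendsto (fun k => (cfQ α (k + 1) : ℝ) / (cfQ α k : ℝ)
      + cfEta α (k + 1) / cfEta α k) (atTop ⊓ 𝓟 K) (𝓝 (γ 1 + δ 1)) := (hγ 1).add (hδ 1)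
  have hinv := hsum.inv₀ hsumne
  have hmain := hinv.mul ((hδ j).add (hδ (j+1)))
  have heq : ∀ k, ((cfQ α (k + 1) : ℝ) / (cfQ α k : ℝ) + cfEta α (k + 1) / cfEta α k)⁻¹
      * (cfEta α (k + j) / cfEta α k + cfEta α (k + j + 1) / cfEta α k)
      = (cfQ α k : ℝ) * (cfEta α (k + j) + cfEta α (k + j + 1)) := by
    intro k
    have hA := hqpos k
    have ha := hηpos k
    have h1 : (cfQ α (k + 1) : ℝ) / (cfQ α k : ℝ) + cfEta α (k + 1) / cfEta α k
        = ((cfQ α k : ℝ) * cfEta α k)⁻¹ := by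
      rw [div_add_div _ _ hA.ne' ha.ne', one_identity hirr hα k, ← one_div]
    rw [h1, inv_inv, ← add_div]
    field_simp
  have : Tendsto (fun k => (cfQ α k : ℝ) * (cfEta α (k + j) + cfEta α (k + j + 1)))
      (atTop ⊓ 𝓟 K) (𝓝 ((γ 1 + δ 1)⁻¹ * (δ j + δ (j + 1)))) :=
    hmain.congr heq
  rw [div_eq_inv_mul]
  exact this
end
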